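/- Every compact subset X of ℂ^n with two-dimensional Hausdorff measure zero, ℋ²(X) = 0, is rationally convex: X coincides with its rationally convex hull X̂^r = {z ∈ ℂ^n : P(z) ∈ P(X) for every polynomial P}. -/

import Mathlib

open MeasureTheory Metric Set Topology

noncomputable instance {n : ℕ} : MeasurableSpace (EuclideanSpace ℂ (Fin n)) := borel _
instance {n : ℕ} : BorelSpace (EuclideanSpace ℂ (Fin n)) := ⟨rfl⟩

/-- The rationally convex hull of a compact set `X ⊆ ℂ^n`:
`{z : P(z) ∈ P(X) for every polynomial P}`. -/
def rationalHull {n : ℕ} (X : Set (EuclideanSpace ℂ (Fin n))) :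
    Set (EuclideanSpace ℂ (Fin n)) :=
  {z | ∀ P : MvPolynomial (Fin n) ℂ,
      MvPolynomial.eval (fun i => z i) P ∈ (fun w => MvPolynomial.eval (fun i => w i) P) '' X}


lemma slab_volume {n : ℕ} (v : Fin n → ℂ) (j₀ : Fin n) (hv : v j₀ ≠ 0) (ρ : ℝ) :
    volume {a : Fin n → ℂ | (∀ j, j ≠ j₀ → ‖a j‖ ≤ 1) ∧ ‖∑ j, a j * v j‖ ≤ ρ} ≤
      ENNReal.ofReal (ρ / ‖v j₀‖) ^ 2 * (NNReal.pi : ENNReal) ^ n := by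
  classical
  letI F1 : Fintype {x // x = j₀} := Subtype.fintype _
  letI F2 : Fintype {i // ¬ i = j₀} := Subtype.fintype _
  set S : Set (Fin n → ℂ) :=
    {a : Fin n → ℂ | (∀ j, j ≠ j₀ → ‖a j‖ ≤ 1) ∧ ‖∑ j, a j * v j‖ ≤ ρ} with hS
  have hclosed : IsClosed S := by
    rw [hS, setOf_and]
    apply IsClosed.inter
    · simp_rw [setOf_forall]
      exact isClosed_iInter fun j => isClosed_iInter fun _ =>
        isClosed_le (continuous_apply j).norm continuous_const
    · exact isClosed_le
        (Continuous.norm <| continuous_finset_sum _ fun j _ =>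
          (continuous_apply j).mul continuous_const) continuous_const
  have hmeas : MeasurableSet S := hclosed.measurableSet
  have MP := volume_preserving_piEquivPiSubtypeProd (fun _ : Fin n => ℂ) (· = j₀)
  set e := MeasurableEquiv.piEquivPiSubtypeProd (fun _ : Fin n => ℂ) (· = j₀) with he
  have hT : MeasurableSet ((⇑e.symm) ⁻¹' S) := e.symm.measurable hmeas
  have h1 := MP.measure_preimage hT.nullMeasurableSet
  rw [show (⇑e) ⁻¹' ((⇑e.symm) ⁻¹' S) = S from by rw [← preimage_comp]; simp] at h1
  rw [h1, Measure.volume_eq_prod, Measure.prod_apply_symm hT]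
  set r : ℝ := ρ / ‖v j₀‖ with hr
  set D : ENNReal := ENNReal.ofReal r ^ 2 * (NNReal.pi : ENNReal) with hD
  set box' : Set ({i // ¬ i = j₀} → ℂ) := {y | ∀ i, ‖y i‖ ≤ 1} with hbox'
  have hbox'meas : MeasurableSet box' := by
    rw [hbox', setOf_forall]
    exact MeasurableSet.iInter fun i =>
      (isClosed_le (continuous_apply i).norm continuous_const).measurableSet
  have key : ∀ y : {i // ¬ i = j₀} → ℂ,
      volume ((fun x => (x, y)) ⁻¹' ((⇑e.symm) ⁻¹' S)) ≤ box'.indicator (fun _ => D) y := by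
    intro y
    by_cases hy : y ∈ box'
    · rw [indicator_of_mem hy]
      set b : ℂ := ∑ i : {i // ¬ i = j₀}, y i * v i with hb
      have hsub : ((fun x => (x, y)) ⁻¹' ((⇑e.symm) ⁻¹' S)) ⊆
          univ.pi (fun _ : {x // x = j₀} => closedBall (-b / v j₀) r) := by
        intro x hx
        have hx2 : ‖∑ j, (e.symm (x, y)) j * v j‖ ≤ ρ := hx.2
        have hsum : ∑ j, (e.symm (x, y)) j * v j = x ⟨j₀, rfl⟩ * v j₀ + b := by
          rw [← Finset.add_sum_erase Finset.univ _ (Finset.mem_univ j₀)]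
          congr 1
          · congr 1
            simp [e, MeasurableEquiv.piEquivPiSubtypeProd,
              Equiv.piEquivPiSubtypeProd_symm_apply]
          · calc ∑ j ∈ Finset.univ.erase j₀, (e.symm (x, y)) j * v j
                = ∑ i : {i // ¬ i = j₀}, (e.symm (x, y)) ↑i * v ↑i :=
                  Finset.sum_subtype _ (fun x => by simp [Finset.mem_erase]) _
              _ = b := by
                  rw [hb]
                  refine Finset.sum_congr rfl fun i _ => ?_
                  congr 1
                  simp [e, MeasurableEquiv.piEquivPiSubtypeProd,
                    Equiv.piEquivPiSubtypeProd_symm_apply, i.2]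
        rw [hsum] at hx2
        intro i _
        have hi : i = ⟨j₀, rfl⟩ := Subtype.ext i.2
        rw [hi, mem_closedBall, Complex.dist_eq]
        have : x ⟨j₀, rfl⟩ - (-b / v j₀) = (x ⟨j₀, rfl⟩ * v j₀ + b) / v j₀ := by
          field_simp
          ring
        rw [this, norm_div, hr]
        gcongr
      calc volume ((fun x => (x, y)) ⁻¹' ((⇑e.symm) ⁻¹' S))
          ≤ volume (univ.pi (fun _ : {x // x = j₀} => closedBall (-b / v j₀) r)) :=
            measure_mono hsub
        _ = ∏ _i : {x // x = j₀}, volume (closedBall (-b / v j₀) r) := volume_pi_pi _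
        _ = D := by
            rw [Finset.prod_const, Complex.volume_closedBall, hD]
            norm_num [Finset.card_univ, Fintype.card_subtype_eq]
    · rw [indicator_of_notMem hy]
      have hempty : ((fun x => (x, y)) ⁻¹' ((⇑e.symm) ⁻¹' S)) = ∅ := by
        rw [eq_empty_iff_forall_notMem]
        intro x hx
        apply hy
        intro i
        have h3 := hx.1 i i.2
        rw [show (e.symm (x, y)) i = y i from by
          simp [e, MeasurableEquiv.piEquivPiSubtypeProd,
            Equiv.piEquivPiSubtypeProd_symm_apply, i.2]] at h3
        exact h3
      rw [hempty]
      simp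
  calc ∫⁻ y, volume ((fun x => (x, y)) ⁻¹' ((⇑e.symm) ⁻¹' S)) ∂volume
      ≤ ∫⁻ y, box'.indicator (fun _ => D) y ∂volume := lintegral_mono key
    _ = D * volume box' := by
        rw [lintegral_indicator hbox'meas]
        simp [Measure.restrict_apply MeasurableSet.univ]
    _ ≤ ENNReal.ofReal r ^ 2 * (NNReal.pi : ENNReal) ^ n := by
        have h4 : volume box' = (NNReal.pi : ENNReal) ^ (n - 1) := by
          have h5 : box' = univ.pi (fun _ : {i // ¬ i = j₀} => closedBall (0:ℂ) 1) := by
            ext y; simp [hbox', mem_closedBall, Complex.dist_eq]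
          rw [h5, volume_pi_pi]
          simp [Complex.volume_closedBall, Finset.prod_const, Finset.card_univ,
            Fintype.card_subtype_compl, Fintype.card_subtype_eq]
        rw [h4, hD, mul_assoc]
        gcongr
        have h6 : (NNReal.pi : ENNReal) * (NNReal.pi : ENNReal) ^ (n - 1)
            = (NNReal.pi : ENNReal) ^ (n - 1 + 1) := (pow_succ' _ _).symm
        rw [h6, Nat.sub_add_cancel j₀.pos]

lemma exists_sep {n : ℕ} (K : Set (Fin n → ℂ)) (hK : IsCompact K)
    (h2 : μH[(2:ℝ)] K = 0) (h0 : (0 : Fin n → ℂ) ∉ K) :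
    ∃ a : Fin n → ℂ, ∀ w ∈ K, ∑ j, a j * w j ≠ 0 := by
  classical
  rcases K.eq_empty_or_nonempty with hKe | hne
  · exact ⟨0, by simp [hKe]⟩
  set δ := infDist 0 K with hδdef
  have hδ : 0 < δ := (hK.isClosed.notMem_iff_infDist_pos hne).1 h0
  have hnormK : ∀ w ∈ K, δ ≤ ‖w‖ := by
    intro w hw
    have := infDist_le_dist_of_mem (x := (0 : Fin n → ℂ)) hw
    rwa [dist_comm, dist_zero_right] at this
  have hcoord : ∀ w ∈ K, ∃ j₀, δ/2 ≤ ‖w j₀‖ := by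
    intro w hw
    by_contra hcon
    push_neg at hcon
    have : ‖w‖ ≤ δ/2 := pi_norm_le_iff_of_nonneg (by positivity) |>.2
      fun j => (hcon j).le
    linarith [hnormK w hw]
  obtain ⟨w₀, hw₀⟩ := hne
  obtain ⟨j₀', _⟩ := hcoord w₀ hw₀
  have hn : 0 < n := j₀'.pos
  -- the constant
  set Abig : ENNReal := ENNReal.ofReal (2*n/δ) ^ 2 * (NNReal.pi : ENNReal) ^ n with hAbig
  have hAtop : Abig ≠ ⊤ := by
    rw [hAbig]
    exact ENNReal.mul_ne_top (by simp [ENNReal.pow_ne_top, ENNReal.ofReal_ne_top])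
      (by simp [ENNReal.pow_ne_top])
  set Vbox : ENNReal := (NNReal.pi : ENNReal) ^ n with hVbox
  have hV0 : Vbox ≠ 0 := by
    rw [hVbox]
    simp [pow_ne_zero_iff, NNReal.pi_ne_zero]
  have hVtop : Vbox ≠ ⊤ := by simp [hVbox, ENNReal.pow_ne_top]
  -- choose ε
  set ε : ENNReal := Vbox / 2 / (Abig + 1) with hε
  have hεpos : 0 < ε := by
    rw [hε]
    apply ENNReal.div_pos
    · exact (ENNReal.div_pos hV0 ENNReal.ofNat_ne_top).ne'
    · simp [hAtop]
  -- extract a cover from the Hausdorff measure hypothesis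
  have hinf : (⨅ (t : ℕ → Set (Fin n → ℂ)) (_ : K ⊆ ⋃ i, t i)
      (_ : ∀ i, EMetric.diam (t i) ≤ 1),
      ∑' i, ⨆ _ : (t i).Nonempty, EMetric.diam (t i) ^ (2:ℝ)) < ε := by
    refine lt_of_le_of_lt ?_ hεpos
    rw [← h2, Measure.hausdorffMeasure_apply]
    exact le_iSup₂ (f := fun (r : ENNReal) (_ : 0 < r) =>
      ⨅ (t : ℕ → Set (Fin n → ℂ)) (_ : K ⊆ ⋃ i, t i) (_ : ∀ i, EMetric.diam (t i) ≤ r),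
      ∑' i, ⨆ _ : (t i).Nonempty, EMetric.diam (t i) ^ (2:ℝ)) 1 zero_lt_one
  rw [iInf_lt_iff] at hinf
  obtain ⟨t, hinf⟩ := hinf
  rw [iInf_lt_iff] at hinf
  obtain ⟨ht1, hinf⟩ := hinf
  rw [iInf_lt_iff] at hinf
  obtain ⟨ht2, ht3⟩ := hinf
  set s : ℕ → Set (Fin n → ℂ) := fun i => t i ∩ K with hsdef
  have hts : ∀ i, EMetric.diam (t i) ≠ ⊤ :=
    fun i => ((ht2 i).trans_lt ENNReal.one_lt_top).ne
  set d : ℕ → ℝ := fun i => (EMetric.diam (t i)).toReal with hddef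
  have hd0 : ∀ i, 0 ≤ d i := fun i => ENNReal.toReal_nonneg
  have hsel : ∀ i : ℕ, ∃ (v : Fin n → ℂ) (j : Fin n),
      ((s i).Nonempty → (v ∈ K ∧ v ∈ t i ∧ δ/2 ≤ ‖v j‖)) := by
    intro i
    by_cases h : (s i).Nonempty
    · obtain ⟨v, hv⟩ := h
      obtain ⟨j1, hj1⟩ := hcoord v hv.2
      exact ⟨v, j1, fun _ => ⟨hv.2, hv.1, hj1⟩⟩
    · exact ⟨0, ⟨0, hn⟩, fun hc => absurd hc h⟩
  choose vi ji hvj using hsel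
  set Si : ℕ → Set (Fin n → ℂ) := fun i =>
    {a | (∀ j, j ≠ ji i → ‖a j‖ ≤ 1) ∧ ‖∑ j, a j * vi i j‖ ≤ n * d i} with hSi
  set box : Set (Fin n → ℂ) := {a | ∀ j, ‖a j‖ ≤ 1} with hbox
  set B : Set (Fin n → ℂ) := {a ∈ box | ∃ w ∈ K, ∑ j, a j * w j = 0} with hB
  have hBsub : B ⊆ ⋃ i, ⋃ (_ : (s i).Nonempty), Si i := by
    rintro a ⟨ha1, w, hw, hsum⟩
    obtain ⟨i, hi⟩ := mem_iUnion.1 (ht1 hw)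
    have hsi : (s i).Nonempty := ⟨w, hi, hw⟩
    refine mem_iUnion.2 ⟨i, mem_iUnion.2 ⟨hsi, fun j _ => ha1 j, ?_⟩⟩
    obtain ⟨hviK, hvit, hvij⟩ := hvj i hsi
    have hdist : ∀ j, ‖vi i j - w j‖ ≤ d i := by
      intro j
      have h1 : ‖vi i j - w j‖ ≤ ‖vi i - w‖ := by
        simpa using norm_le_pi_norm (vi i - w) j
      have h2' : dist (vi i) w ≤ d i := by
        rw [dist_edist]
        exact ENNReal.toReal_mono (hts i) (EMetric.edist_le_diam_of_mem hvit hi)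
      rw [dist_eq_norm] at h2'
      linarith
    have hrw : ∑ j, a j * vi i j = ∑ j, a j * (vi i j - w j) := by
      rw [← sub_zero (∑ j, a j * vi i j), ← hsum, ← Finset.sum_sub_distrib]
      exact Finset.sum_congr rfl fun j _ => by ring
    rw [hrw]
    calc ‖∑ j, a j * (vi i j - w j)‖ ≤ ∑ j, ‖a j * (vi i j - w j)‖ := norm_sum_le _ _
      _ ≤ ∑ _j : Fin n, 1 * d i := by
          refine Finset.sum_le_sum fun j _ => ?_
          rw [norm_mul]
          exact mul_le_mul (ha1 j) (hdist j) (norm_nonneg _) zero_le_one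
      _ = n * d i := by simp [Finset.sum_const, Finset.card_univ]
  have hterm : ∀ i, volume (⋃ (_ : (s i).Nonempty), Si i) ≤
      Abig * ⨆ _ : (t i).Nonempty, EMetric.diam (t i) ^ (2:ℝ) := by
    intro i
    by_cases h : (s i).Nonempty
    · refine le_trans (measure_mono (iUnion_subset fun _ => subset_rfl)) ?_
      obtain ⟨hviK, hvit, hvij⟩ := hvj i h
      have hvpos : (0:ℝ) < ‖vi i (ji i)‖ := lt_of_lt_of_le (by linarith) hvij
      have hvne : vi i (ji i) ≠ 0 := by
        intro hc
        rw [hc] at hvpos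
        simp at hvpos
      refine le_trans (slab_volume (vi i) (ji i) hvne (n * d i)) ?_
      have hratio : n * d i / ‖vi i (ji i)‖ ≤ 2*n/δ * d i := by
        have h1 : n * d i / ‖vi i (ji i)‖ ≤ n * d i / (δ/2) := by
          apply div_le_div_of_nonneg_left ?_ (by linarith) hvij
          positivity
        have h2' : n * d i / (δ/2) = 2*n/δ * d i := by
          field_simp
        linarith
      have hstep : ENNReal.ofReal (n * d i / ‖vi i (ji i)‖) ^ 2 ≤
          (ENNReal.ofReal (2*n/δ) * ENNReal.ofReal (d i)) ^ 2 := by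
        rw [← ENNReal.ofReal_mul (by positivity)]
        exact pow_le_pow_left' (ENNReal.ofReal_le_ofReal hratio) 2
      calc ENNReal.ofReal (n * d i / ‖vi i (ji i)‖) ^ 2 * (NNReal.pi : ENNReal) ^ n
          ≤ (ENNReal.ofReal (2*n/δ) * ENNReal.ofReal (d i)) ^ 2 * (NNReal.pi : ENNReal) ^ n :=
            mul_le_mul_left hstep _
        _ = Abig * ENNReal.ofReal (d i) ^ 2 := by rw [hAbig]; ring
        _ ≤ Abig * EMetric.diam (t i) ^ (2:ℝ) := by
            apply mul_le_mul_right
            rw [hddef, ENNReal.ofReal_toReal (hts i)]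
            rw [show ((2:ℝ) = ((2:ℕ):ℝ)) by norm_num, ENNReal.rpow_natCast]
        _ ≤ Abig * ⨆ _ : (t i).Nonempty, EMetric.diam (t i) ^ (2:ℝ) := by
            apply mul_le_mul_right
            exact le_iSup_of_le (h.mono inter_subset_left) le_rfl
    · rw [iUnion_eq_empty.2 (fun hc => absurd hc h)]
      simp
  have hBvol : volume B < Vbox := by
    calc volume B ≤ volume (⋃ i, ⋃ (_ : (s i).Nonempty), Si i) := measure_mono hBsub
      _ ≤ ∑' i, volume (⋃ (_ : (s i).Nonempty), Si i) := measure_iUnion_le _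
      _ ≤ ∑' i, Abig * ⨆ _ : (t i).Nonempty, EMetric.diam (t i) ^ (2:ℝ) :=
          ENNReal.tsum_le_tsum hterm
      _ = Abig * ∑' i, ⨆ _ : (t i).Nonempty, EMetric.diam (t i) ^ (2:ℝ) :=
          ENNReal.tsum_mul_left
      _ ≤ Abig * ε := mul_le_mul_right ht3.le _
      _ ≤ (Abig + 1) * ε := mul_le_mul_left le_self_add _
      _ = Vbox / 2 := by rw [hε, ENNReal.mul_div_cancel (by simp) (by simp [hAtop])]
      _ < Vbox := ENNReal.half_lt_self hV0 hVtop
  have hvolbox : volume box = Vbox := by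
    have hbe : box = univ.pi (fun _ : Fin n => closedBall (0:ℂ) 1) := by
      ext a
      simp [hbox, mem_closedBall, dist_zero_right]
    rw [hbe, volume_pi_pi]
    simp [Complex.volume_closedBall, Finset.prod_const, Finset.card_univ, hVbox]
  have hnsub : ¬ box ⊆ B := by
    intro hsub
    have := measure_mono (μ := (volume : Measure (Fin n → ℂ))) hsub
    rw [hvolbox] at this
    exact absurd this (not_le.2 hBvol)
  obtain ⟨a, ha, hna⟩ := not_subset.1 hnsub
  exact ⟨a, fun w hw hsum => hna ⟨ha, w, hw, hsum⟩⟩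
/-- Every compact set in `ℂ^n` of zero area (`ℋ²`) is rationally convex. -/
theorem rationally_convex_of_H2_null
    {n : ℕ} (X : Set (EuclideanSpace ℂ (Fin n))) (hX : IsCompact X)
    (h2 : μH[(2 : ℝ)] X = 0) :
    rationalHull X = X := by
  refine Subset.antisymm ?_ (fun z hz P => ⟨z, hz, rfl⟩)
  intro z hz
  by_contra hzX
  set f : EuclideanSpace ℂ (Fin n) → (Fin n → ℂ) := fun w j => w j - z j with hf
  have hflip : LipschitzWith 1 f := by
    have h1 : LipschitzWith 1 (⇑(WithLp.equiv 2 (Fin n → ℂ))) := PiLp.lipschitzWith_ofLp 2 _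
    have h2' : Isometry (fun y : Fin n → ℂ => y - fun j => z j) :=
      Isometry.of_dist_eq fun a b => dist_sub_right a b _
    have hcomp : f = (fun y : Fin n → ℂ => y - fun j => z j) ∘
        (⇑(WithLp.equiv 2 (Fin n → ℂ))) := rfl
    rw [hcomp]
    simpa using (h2'.lipschitz.comp h1)
  have hK2 : μH[(2:ℝ)] (f '' X) = 0 := by
    refine le_antisymm ?_ zero_le
    have := hflip.hausdorffMeasure_image_le (by norm_num : (0:ℝ) ≤ 2) X
    simpa [h2] using this
  have hKcomp : IsCompact (f '' X) := hX.image hflip.continuous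
  have h0K : (0 : Fin n → ℂ) ∉ f '' X := by
    rintro ⟨w, hw, hfw⟩
    have : w = z := PiLp.ext fun j => sub_eq_zero.1 (congr_fun hfw j)
    exact hzX (this ▸ hw)
  obtain ⟨a, ha⟩ := exists_sep (f '' X) hKcomp hK2 h0K
  set P : MvPolynomial (Fin n) ℂ :=
    ∑ j, MvPolynomial.C (a j) * (MvPolynomial.X j - MvPolynomial.C (z j)) with hP
  obtain ⟨w, hw, hPw⟩ := hz P
  have hPz : MvPolynomial.eval (fun i => z i) P = 0 := by
    simp [hP]
  rw [hPz] at hPw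
  refine ha (f w) ⟨w, hw, rfl⟩ ?_
  have : MvPolynomial.eval (fun i => w i) P = ∑ j, a j * (w j - z j) := by
    simp [hP]
  rw [← this]; exact hPw
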